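/- Let C : ℕ → ℤ satisfy C(2) = -Σ_{y=2}^{m+1} binomial(2, y) and the recursion C(N) = Σ_{k=1}^{N-2} (-1)^{k+1} binomial(N, k) C(N-k) - Σ_{i=N-1}^{min(m, N-1)} 1 for N ≥ 3, where m ≥ 1 is fixed. Then C(N) = -Σ_{y=2}^{m+1} binomial(N, y) for all N ≥ 2. -/

import Mathlib

lemma cc_swap (n k y : ℕ) (hk : k ≤ n) :
    n.choose k * (n - k).choose y = n.choose y * (n - y).choose k := by
  by_cases h : k + y ≤ n
  · have h1 : n - k ≤ n := Nat.sub_le _ _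
    have h2 : y ≤ n - k := by omega
    have := Nat.choose_mul (n := n) h2
    rw [Nat.choose_symm hk] at this
    have h3 : n - k - y = (n - y) - k := by omega
    rw [h3, Nat.choose_symm (by omega : k ≤ n - y)] at this
    exact this
  · by_cases hy : y ≤ n
    · rw [Nat.choose_eq_zero_of_lt (by omega : n - k < y),
        Nat.choose_eq_zero_of_lt (by omega : n - y < k)]
      ring
    · rw [Nat.choose_eq_zero_of_lt (by omega : n - k < y),
        Nat.choose_eq_zero_of_lt (by omega : n < y)]
      ring

lemma alt_partial (n : ℕ) (hn : 1 ≤ n) (M : ℕ) (hM : n ≤ M) :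
    ∑ k ∈ Finset.Icc 1 M, (-1 : ℤ) ^ (k + 1) * (n.choose k : ℤ) = 1 := by
  rw [← Finset.sum_subset (Finset.Icc_subset_Icc_right hM)
      (fun k hk hk' => by
        simp only [Finset.mem_Icc] at hk hk'
        rw [Nat.choose_eq_zero_of_lt (by omega)]
        ring)]
  have h := Int.alternating_sum_range_choose (n := n)
  rw [if_neg (by omega)] at h
  have : Finset.Icc 1 n = Finset.Ico 1 (n + 1) := by rw [Finset.Ico_add_one_right_eq_Icc]
  rw [this, Finset.sum_Ico_eq_sum_range]
  have h2 : ∑ i ∈ Finset.range (n + 1), (-1 : ℤ) ^ i * n.choose i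
      = 1 + ∑ i ∈ Finset.range n, (-1 : ℤ) ^ (1 + i) * n.choose (1 + i) := by
    rw [Finset.sum_range_succ' (fun i => (-1 : ℤ) ^ i * n.choose i) n]
    simp [add_comm]
  rw [h2] at h
  have : ∑ i ∈ Finset.range n, (-1 : ℤ) ^ (1 + i) * n.choose (1 + i) = -1 := by linarith
  calc ∑ i ∈ Finset.range (n + 1 - 1), (-1 : ℤ) ^ ((1 + i) + 1) * n.choose (1 + i)
      = -∑ i ∈ Finset.range n, (-1 : ℤ) ^ (1 + i) * n.choose (1 + i) := by
        simp only [Nat.add_sub_cancel, ← Finset.sum_neg_distrib]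
        refine Finset.sum_congr rfl fun i _ => by ring
    _ = 1 := by rw [this]; ring

lemma per_y (N y : ℕ) (hN : 3 ≤ N) (hy : 2 ≤ y) :
    ∑ k ∈ Finset.Icc 1 (N - 2), (-1 : ℤ) ^ (k + 1) * (N.choose k : ℤ) * ((N - k).choose y : ℤ)
      = (N.choose y : ℤ) - (if y = N then 1 else 0) := by
  have key : ∀ k ∈ Finset.Icc 1 (N - 2),
      (-1 : ℤ) ^ (k + 1) * (N.choose k : ℤ) * ((N - k).choose y : ℤ)
        = (N.choose y : ℤ) * ((-1 : ℤ) ^ (k + 1) * ((N - y).choose k : ℤ)) := by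
    intro k hk
    simp only [Finset.mem_Icc] at hk
    have h' : ((N.choose k * (N - k).choose y : ℕ) : ℤ)
        = ((N.choose y * (N - y).choose k : ℕ) : ℤ) := by
      exact_mod_cast congrArg (Nat.cast : ℕ → ℤ) (cc_swap N k y (by omega))
    push_cast at h'
    linear_combination ((-1 : ℤ) ^ (k + 1)) * h'
  rw [Finset.sum_congr rfl key, ← Finset.mul_sum]
  by_cases hyN : y < N
  · rw [alt_partial (N - y) (by omega) (N - 2) (by omega), if_neg (by omega)]
    ring
  · have hNy : N - y = 0 := by omega
    rw [hNy]
    have : ∀ k ∈ Finset.Icc 1 (N - 2), (-1 : ℤ) ^ (k + 1) * ((Nat.choose 0 k : ℕ) : ℤ) = 0 := by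
      intro k hk
      simp only [Finset.mem_Icc] at hk
      rw [Nat.choose_eq_zero_of_lt (by omega)]
      ring
    rw [Finset.sum_congr rfl this, Finset.sum_const, smul_zero, mul_zero]
    by_cases h : y = N
    · subst h; simp
    · rw [Nat.choose_eq_zero_of_lt (by omega), if_neg h]; simp

theorem stmt12 (m : ℕ) (hm : 1 ≤ m) (C : ℕ → ℤ)
    (h2 : C 2 = -∑ y ∈ Finset.Icc 2 (m + 1), (Nat.choose 2 y : ℤ))
    (hrec : ∀ N, 3 ≤ N →
      C N = (∑ k ∈ Finset.Icc 1 (N - 2),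
          (-1 : ℤ) ^ (k + 1) * (Nat.choose N k : ℤ) * C (N - k)) -
        ∑ _i ∈ Finset.Icc (N - 1) (min m (N - 1)), (1 : ℤ)) :
    ∀ N, 2 ≤ N → C N = -∑ y ∈ Finset.Icc 2 (m + 1), (Nat.choose N y : ℤ) := by
  intro N
  induction N using Nat.strong_induction_on with
  | _ N ih =>
  intro hN
  rcases eq_or_lt_of_le hN with h | h
  · rw [← h]; exact h2
  · have h3 : 3 ≤ N := h
    rw [hrec N h3]
    have hsub : ∀ k ∈ Finset.Icc 1 (N - 2),
        (-1 : ℤ) ^ (k + 1) * (Nat.choose N k : ℤ) * C (N - k)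
          = -∑ y ∈ Finset.Icc 2 (m + 1),
              (-1 : ℤ) ^ (k + 1) * (Nat.choose N k : ℤ) * ((N - k).choose y : ℤ) := by
      intro k hk
      simp only [Finset.mem_Icc] at hk
      rw [ih (N - k) (by omega) (by omega), mul_neg, Finset.mul_sum]
    rw [Finset.sum_congr rfl hsub, Finset.sum_neg_distrib, Finset.sum_comm]
    have hmain : ∀ y ∈ Finset.Icc 2 (m + 1),
        ∑ k ∈ Finset.Icc 1 (N - 2),
          (-1 : ℤ) ^ (k + 1) * (Nat.choose N k : ℤ) * ((N - k).choose y : ℤ)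
        = (N.choose y : ℤ) - (if y = N then 1 else 0) := fun y hy =>
      per_y N y h3 (Finset.mem_Icc.mp hy).1
    rw [Finset.sum_congr rfl hmain, Finset.sum_sub_distrib]
    have hind : ∑ y ∈ Finset.Icc 2 (m + 1), (if y = N then (1 : ℤ) else 0)
        = if N - 1 ≤ m then 1 else 0 := by
      rw [Finset.sum_ite_eq' (Finset.Icc 2 (m + 1)) N (fun _ => (1 : ℤ))]
      simp only [Finset.mem_Icc]
      by_cases h : N ≤ m + 1
      · rw [if_pos ⟨by omega, h⟩, if_pos (by omega)]
      · rw [if_neg (by omega), if_neg (by omega)]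
    have heps : ∑ _i ∈ Finset.Icc (N - 1) (min m (N - 1)), (1 : ℤ)
        = if N - 1 ≤ m then 1 else 0 := by
      rw [Finset.sum_const, Nat.card_Icc]
      simp only [nsmul_eq_mul, mul_one]
      split_ifs with h <;> omega
    rw [hind, heps]
    ring
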